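/- Invariance under isochoric change of reference configuration: let F₀ be a 3×3 real matrix with det F₀ = 1. For symmetric positive definite C and C_i^n and κ ≥ 0, define N(C, C_i) := unimodular part of (C_i + κ·C̄), where C̄ is the unimodular part of C. Then N(F₀^{-T} C F₀^{-1}, F₀^{-T} C_i^n F₀^{-1}) = F₀^{-T}·N(C, C_i^n)·F₀^{-1}. -/
import Mathlib


open Matrix

/-- Unimodular part of a 3×3 matrix. -/
noncomputable def uni (A : Matrix (Fin 3) (Fin 3) ℝ) : Matrix (Fin 3) (Fin 3) ℝ :=
  A.det ^ (-(1 : ℝ) / 3) • A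

/-- The explicit update map of the time-stepping scheme. -/
noncomputable def updMap (κ : ℝ) (C Ci : Matrix (Fin 3) (Fin 3) ℝ) :
    Matrix (Fin 3) (Fin 3) ℝ :=
  uni (Ci + κ • uni C)

lemma uni_conj (P Q A : Matrix (Fin 3) (Fin 3) ℝ) (hP : P.det = 1) (hQ : Q.det = 1) :
    uni (P * A * Q) = P * uni A * Q := by
  unfold uni
  rw [det_mul, det_mul, hP, hQ, one_mul, mul_one, Matrix.mul_smul, Matrix.smul_mul]

/-- Invariance of the numerical scheme under the isochoric change of the
reference configuration. -/
theorem update_invariant_reference_change (F₀ : Matrix (Fin 3) (Fin 3) ℝ)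
    (hF₀ : F₀.det = 1) (C Cin : Matrix (Fin 3) (Fin 3) ℝ)
    (hC : C.PosDef) (hCin : Cin.PosDef) (κ : ℝ) (hκ : 0 ≤ κ) :
    updMap κ (F₀⁻¹ᵀ * C * F₀⁻¹) (F₀⁻¹ᵀ * Cin * F₀⁻¹) =
      F₀⁻¹ᵀ * updMap κ C Cin * F₀⁻¹ := by
  have hP : (F₀⁻¹ᵀ).det = 1 := by
    rw [det_transpose, det_nonsing_inv, hF₀, Ring.inverse_one]
  have hQ : (F₀⁻¹).det = 1 := by
    rw [det_nonsing_inv, hF₀, Ring.inverse_one]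
  unfold updMap
  rw [uni_conj _ _ C hP hQ]
  have h : F₀⁻¹ᵀ * Cin * F₀⁻¹ + κ • (F₀⁻¹ᵀ * uni C * F₀⁻¹)
      = F₀⁻¹ᵀ * (Cin + κ • uni C) * F₀⁻¹ := by
    rw [Matrix.mul_add, Matrix.add_mul, Matrix.mul_smul, Matrix.smul_mul]
  rw [h, uni_conj _ _ _ hP hQ]
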